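/- Let Ω ⊂ ℝ^d (d ≥ 3) be a convex compact domain with smooth boundary of finite type and let Ω_j ⊂ ℝ^{d−1} (1 ≤ j ≤ d) be the intersection of Ω with the coordinate hyperplane x_j = 0. If (ã_1,…,ã_{d−2}) and (𝔞_1,…,𝔞_{d−1}) are the multitypes of ∂Ω_j and of ∂Ω at a common point P ∈ ∂Ω_j ⊂ ∂Ω respectively, then for every 1 ≤ i ≤ d − 2 one has ã_i ≤ 𝔞_{i+1}. -/

import Mathlib

open MeasureTheory Finset
open scoped BigOperators RealInnerProductSpace Classical

noncomputable section

namespace Paper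

/-- `ℝ^d` with the Euclidean structure. -/
abbrev E (d : ℕ) := EuclideanSpace ℝ (Fin d)

/-- The integer vector `k` viewed as a point of `ℝ^d`. -/
def intVec {d : ℕ} (k : Fin d → ℤ) : E d := WithLp.toLp 2 (fun i => (k i : ℝ))

/-- `#(ℕ^d ∩ S)`, the number of positive integer lattice points in `S`. -/
def countPos {d : ℕ} (S : Set (E d)) : ℕ :=
  {k : Fin d → ℤ | (∀ i, 1 ≤ k i) ∧ intVec k ∈ S}.ncard

/-- `#(ℤ₊^d ∩ S)`, the number of nonnegative integer lattice points in `S`. -/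
def countNonneg {d : ℕ} (S : Set (E d)) : ℕ :=
  {k : Fin d → ℤ | (∀ i, 0 ≤ k i) ∧ intVec k ∈ S}.ncard

/-- `#(ℤ^d ∩ S)`, the number of integer lattice points in `S`. -/
def countZ {d : ℕ} (S : Set (E d)) : ℕ :=
  {k : Fin d → ℤ | intVec k ∈ S}.ncard

/-- `tAS = {(t a₁ x₁, …, t a_d x_d) : x ∈ S}` for `A = diag(a₁,…,a_d)`. -/
def stretch {d : ℕ} (t : ℝ) (a : Fin d → ℝ) (S : Set (E d)) : Set (E d) :=
  {y | ∃ x ∈ S, ∀ i, y i = t * a i * x i}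

/-- `A = diag(a₁,…,a_d)` is positive definite with determinant 1. -/
def IsDiag {d : ℕ} (a : Fin d → ℝ) : Prop := (∀ i, 0 < a i) ∧ ∏ i, a i = 1

/-- `a_* = ‖A⁻¹‖_∞ = max aᵢ⁻¹`. -/
def aStar {d : ℕ} (a : Fin d → ℝ) : ℝ := ⨆ i, (a i)⁻¹

/-- symmetry with respect to each coordinate hyperplane. -/
def SymmetricCoords {d : ℕ} (Ω : Set (E d)) : Prop :=
  ∀ (j : Fin d) (x : E d), x ∈ Ω → WithLp.toLp 2 (fun i => if i = j then -x i else x i) ∈ Ω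

/-- `Ω_j = Ω ∩ {x_j = 0}` as a subset of `ℝ^d`. -/
def slice {d : ℕ} (Ω : Set (E d)) (j : Fin d) : Set (E d) := {x ∈ Ω | x j = 0}

/-- `|Ω_j|`: the `(d-1)`-dimensional Lebesgue measure of `Ω ∩ {x_j = 0}`,
computed in the Euclidean space with coordinates indexed by `i ≠ j`. -/
def sliceVol {d : ℕ} (Ω : Set (E d)) (j : Fin d) : ℝ :=
  (volume {y : EuclideanSpace ℝ {i : Fin d // i ≠ j} |
      (show E d from WithLp.toLp 2 (fun i => if h : i = j then 0 else y ⟨i, h⟩)) ∈ Ω}).toReal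

/-- A local chart for `∂Ω` at `P`: a unit outward normal `n`, and a `C^k` convex-graph
parametrization `Γ(V) = P + V - Φ(V) n` of the boundary over the tangent plane. -/
structure BoundaryChart {d : ℕ} (k : ℕ∞) (Ω : Set (E d)) (P : E d) where
  n : E d
  norm_n : ‖n‖ = 1
  outer : ∀ x ∈ Ω, ⟪x, n⟫ ≤ ⟪P, n⟫
  Φ : E d → ℝ
  smooth : ContDiff ℝ k Φ
  Φ0 : Φ 0 = 0
  dΦ0 : fderiv ℝ Φ 0 = 0
  ε : ℝ
  εpos : 0 < ε
  graph : ∀ V ∈ (Submodule.span ℝ {n})ᗮ, ‖V‖ < ε → P + V - Φ V • n ∈ frontier Ω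
  graph' : ∀ x ∈ frontier Ω, ‖x - P‖ < ε →
    ∃ V ∈ (Submodule.span ℝ {n})ᗮ, x = P + V - Φ V • n

/-- `D_x^j Φ(0)`: the `j`-th derivative of `Φ` at `0` in the direction `x`. -/
def dirDeriv {d : ℕ} (Φ : E d → ℝ) (j : ℕ) (x : E d) : ℝ :=
  iteratedDeriv j (fun t : ℝ => Φ (t • x)) 0

/-- `S_P^m`: tangent directions in which all derivatives of `Φ` at `0`
of orders `2,…,m` vanish. -/
def flagSet {d : ℕ} (Φ : E d → ℝ) (n : E d) (m : ℕ) : Set (E d) :=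
  {x | x ∈ (Submodule.span ℝ {n})ᗮ ∧ ∀ j, 2 ≤ j → j ≤ m → dirDeriv Φ j x = 0}

/-- Data of a smooth boundary point of finite type: a smooth boundary chart
together with the multitype `a = (𝔞₁,…,𝔞_{d-1})` (a monotone tuple of even numbers
` ≥ 2`) and an adapted orthonormal basis `V` of the tangent plane, so that for every
`m ≥ 2` the flag subspace `S_P^m` is spanned by the `V i` with `m < a i`.  (In
particular `dim S_P^m = (d-1) - #{i : 𝔞ᵢ ≤ m}`, which is the defining property of the
multitype, and all entries being finite natural numbers encodes finite type.) -/
structure PointData {d : ℕ} (Ω : Set (E d)) (P : E d) extends BoundaryChart ⊤ Ω P where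
  a : Fin (d - 1) → ℕ
  a_mono : Monotone a
  a_even : ∀ i, Even (a i)
  a_two : ∀ i, 2 ≤ a i
  V : Fin (d - 1) → E d
  V_on : Orthonormal ℝ V
  V_tangent : ∀ i, V i ∈ (Submodule.span ℝ {n})ᗮ
  V_flag : ∀ m, 2 ≤ m →
    Submodule.span ℝ (flagSet Φ n m) = Submodule.span ℝ (V '' {i | m < a i})

/-- `ν_Ω(P) = Σ_{i=1}^{d-1} 𝔞ᵢ⁻¹`. -/
def nuP {d : ℕ} {Ω : Set (E d)} {P : E d} (pd : PointData Ω P) : ℝ :=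
  ∑ i : Fin (d - 1), ((pd.a i : ℝ))⁻¹

/-- `ν_Ω^{(2)}(P) = Σ_{i=2}^{d-1} 𝔞ᵢ⁻¹` (`0` if `d = 2`). -/
def nu2P {d : ℕ} {Ω : Set (E d)} {P : E d} (pd : PointData Ω P) : ℝ :=
  ∑ i ∈ Finset.univ.filter (fun i : Fin (d - 1) => 1 ≤ (i : ℕ)), ((pd.a i : ℝ))⁻¹

/-- `ν_Ω = min_{P ∈ ∂Ω} ν_Ω(P)`. -/
def nuOmega {d : ℕ} {Ω : Set (E d)} (pd : ∀ P ∈ frontier Ω, PointData Ω P) : ℝ :=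
  sInf {v : ℝ | ∃ P, ∃ h : P ∈ frontier Ω, v = nuP (pd P h)}

/-- `μ_Ω = 1/2 + min_{P ∈ ∂Ω} ν_Ω^{(2)}(P)`. -/
def muOmega {d : ℕ} {Ω : Set (E d)} (pd : ∀ P ∈ frontier Ω, PointData Ω P) : ℝ :=
  1 / 2 + sInf {v : ℝ | ∃ P, ∃ h : P ∈ frontier Ω, v = nu2P (pd P h)}

/-- The diagonal image `Ak` of an integer vector `k`. -/
def diagVec {d : ℕ} (a : Fin d → ℝ) (k : Fin d → ℤ) : E d := WithLp.toLp 2 (fun i => a i * (k i : ℝ))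

/-- `dist_∞(ξ, ℝ n)`, the `ℓ^∞` distance from `ξ` to the line `ℝ n`. -/
def distInfLine {d : ℕ} (ξ n : E d) : ℝ := ⨅ c : ℝ, ⨆ i, |ξ i - c * n i|

/-- Insert a `0` at position `j`. -/
def insert0 {n : ℕ} (j : Fin (n + 1)) (z : EuclideanSpace ℝ (Fin n)) : E (n + 1) :=
  WithLp.toLp 2 (fun i => Fin.insertNth (α := fun _ : Fin (n + 1) => ℝ) j (0 : ℝ) (fun l => z l) i)

/-- `Ω_j` regarded as a subset of `ℝ^{d-1}` (delete the `j`-th coordinate). -/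
def sliceLower {n : ℕ} (Ω : Set (E (n + 1))) (j : Fin (n + 1)) :
    Set (EuclideanSpace ℝ (Fin n)) := {z | insert0 j z ∈ Ω}



/- ===== auxiliary lemmas ===== -/

private lemma abs_le_of_mem_uIcc {t z : ℝ} (hz : z ∈ Set.uIcc 0 t) : |z| ≤ |t| := by
  rcases Set.mem_uIcc.mp hz with h | h
  · rw [abs_le]
    constructor
    · have := le_abs_self t; linarith [h.1]
    · have := le_abs_self t; linarith [h.2]
  · rw [abs_le]
    constructor
    · have := neg_abs_le t; linarith [h.1]
    · have := neg_abs_le t; linarith [h.2]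

lemma jets_isLittleO {f : ℝ → ℝ} {m : ℕ} (hf : ContDiff ℝ (⊤ : ℕ∞) f)
    (h : ∀ k ≤ m, iteratedDeriv k f 0 = 0) :
    f =o[nhds 0] fun t : ℝ => t ^ m := by
  induction m generalizing f with
  | zero =>
    simp only [pow_zero]
    rw [Asymptotics.isLittleO_one_iff]
    have h0 : f 0 = 0 := by simpa using h 0 le_rfl
    simpa [h0] using hf.continuous.tendsto 0
  | succ m ih =>
    have hdf : ContDiff ℝ (⊤ : ℕ∞) (deriv f) := (contDiff_infty_iff_deriv.mp hf).2
    have h1 : deriv f =o[nhds 0] fun t : ℝ => t ^ m := by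
      refine ih hdf fun k hk => ?_
      rw [← iteratedDeriv_succ']
      exact h (k + 1) (by omega)
    have h0 : f 0 = 0 := by simpa using h 0 (by omega)
    rw [Asymptotics.isLittleO_iff] at h1 ⊢
    intro c hc
    rcases Metric.eventually_nhds_iff.mp (h1 hc) with ⟨δ, hδ, hball⟩
    rw [Metric.eventually_nhds_iff]
    refine ⟨δ, hδ, fun t ht => ?_⟩
    have ht' : |t| < δ := by simpa [Real.dist_eq] using ht
    have hbound : ∀ z ∈ Set.uIcc (0:ℝ) t, ‖deriv f z‖ ≤ c * |t| ^ m := by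
      intro z hz
      have hz' : |z| ≤ |t| := abs_le_of_mem_uIcc hz
      have h2 : ‖deriv f z‖ ≤ c * ‖z ^ m‖ :=
        hball (by simpa [Real.dist_eq] using lt_of_le_of_lt hz' ht')
      calc ‖deriv f z‖ ≤ c * ‖z ^ m‖ := h2
        _ ≤ c * |t| ^ m := by
            rw [Real.norm_eq_abs, abs_pow]
            exact mul_le_mul_of_nonneg_left (pow_le_pow_left₀ (abs_nonneg z) hz' m) hc.le
    have key := Convex.norm_image_sub_le_of_norm_hasDerivWithin_le
      (f := f) (f' := deriv f) (s := Set.uIcc (0:ℝ) t)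
      (fun z _ => ((hf.differentiable (by norm_num)) z).hasDerivAt.hasDerivWithinAt)
      hbound (convex_uIcc _ _) Set.left_mem_uIcc Set.right_mem_uIcc
    rw [h0, sub_zero] at key
    calc ‖f t‖ ≤ c * |t| ^ m * ‖t - 0‖ := key
      _ = c * ‖t ^ (m + 1)‖ := by
          rw [Real.norm_eq_abs, Real.norm_eq_abs, sub_zero, abs_pow, pow_succ]; ring

lemma iteratedDeriv_monomial (N : ℕ) :
    ∀ k, iteratedDeriv k (fun t : ℝ => t ^ N) =
      fun t => (N.descFactorial k : ℝ) * t ^ (N - k) := by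
  intro k
  induction k with
  | zero => simp [iteratedDeriv_zero]
  | succ k ih =>
    rw [iteratedDeriv_succ, ih]
    funext t
    rw [deriv_const_mul _ (differentiable_pow _ |>.differentiableAt)]
    rw [deriv_pow_field]
    rw [Nat.descFactorial_succ, Nat.sub_sub]
    push_cast
    ring

lemma iteratedDeriv_sub' {f g : ℝ → ℝ} (hf : ContDiff ℝ (⊤:ℕ∞) f) (hg : ContDiff ℝ (⊤:ℕ∞) g)
    (k : ℕ) (x : ℝ) :
    iteratedDeriv k (fun t => f t - g t) x = iteratedDeriv k f x - iteratedDeriv k g x := by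
  have hf' : ContDiff ℝ (k:ℕ∞) f := hf.of_le (mod_cast le_top)
  have hg' : ContDiff ℝ (k:ℕ∞) g := hg.of_le (mod_cast le_top)
  simp only [iteratedDeriv]
  have : (fun t => f t - g t) = f + -g := by funext t; simp [sub_eq_add_neg]
  rw [this, iteratedFDeriv_add_apply hf'.contDiffAt (show ContDiffAt ℝ (k:ℕ∞) (-g) x from hg'.neg.contDiffAt), iteratedFDeriv_neg_apply]
  simp [sub_eq_add_neg]

lemma isLittleO_jets : ∀ (m : ℕ) {f : ℝ → ℝ}, ContDiff ℝ (⊤:ℕ∞) f →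
    (f =o[nhds 0] fun t : ℝ => t ^ m) → ∀ k ≤ m, iteratedDeriv k f 0 = 0 := by
  have jets := @Paper.jets_isLittleO
  intro m
  induction m with
  | zero =>
    intro f hf ho k hk
    have h1 : Filter.Tendsto f (nhds 0) (nhds 0) := by
      rw [← Asymptotics.isLittleO_one_iff ℝ]
      simpa using ho
    have h2 : Filter.Tendsto f (nhds 0) (nhds (f 0)) := hf.continuous.tendsto 0
    have h3 := tendsto_nhds_unique h2 h1
    simp [Nat.le_zero.mp hk, iteratedDeriv_zero, h3]
  | succ m ih =>
    intro f hf ho k hk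
    have hom : f =o[nhds 0] fun t : ℝ => t ^ m := by
      refine ho.trans_isBigO ?_
      rw [Asymptotics.isBigO_iff]
      refine ⟨1, ?_⟩
      rw [Metric.eventually_nhds_iff]
      refine ⟨1, one_pos, fun t ht => ?_⟩
      have ht' : |t| ≤ 1 := le_of_lt (by simpa [Real.dist_eq] using ht)
      simp only [Real.norm_eq_abs, abs_pow, one_mul]
      exact pow_le_pow_of_le_one (abs_nonneg t) ht' (by omega)
    have base := ih hf hom
    rcases Nat.lt_or_ge k (m + 1) with hk' | hk'
    · exact base k (by omega)
    have hkeq : k = m + 1 := by omega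
    subst hkeq
    set c : ℝ := iteratedDeriv (m + 1) f 0 with hc
    set C : ℝ := c / (Nat.factorial (m+1) : ℝ) with hC
    set g : ℝ → ℝ := fun t => f t - C * t ^ (m + 1) with hgdef
    have hmono : ContDiff ℝ (⊤:ℕ∞) fun t : ℝ => C * t ^ (m + 1) :=
      contDiff_const.mul (contDiff_id.pow (m + 1))
    have hg : ContDiff ℝ (⊤:ℕ∞) g := hf.sub hmono
    have hjets : ∀ k ≤ m + 1, iteratedDeriv k g 0 = 0 := by
      intro k hk2
      rw [hgdef, iteratedDeriv_sub' hf hmono]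
      have hsm : iteratedDeriv k (fun t : ℝ => C * t ^ (m + 1)) 0
          = C * iteratedDeriv k (fun t : ℝ => t ^ (m + 1)) 0 := by
        simp only [iteratedDeriv]
        have := iteratedFDeriv_const_smul_apply (𝕜 := ℝ) (i := k)
          (f := fun t : ℝ => t ^ (m+1)) (x := (0:ℝ)) (a := C)
          ((contDiff_id.pow (m + 1)).contDiffAt.of_le (mod_cast le_top))
        rw [show (fun t : ℝ => C * t ^ (m+1)) = (C • fun t : ℝ => t ^ (m+1)) from rfl, this]
        rfl
      have hmval : iteratedDeriv k (fun t : ℝ => C * t ^ (m + 1)) 0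
          = C * (((m+1).descFactorial k : ℝ) * (0:ℝ) ^ (m + 1 - k)) := by
        rw [hsm, Paper.iteratedDeriv_monomial]
      rcases Nat.lt_or_ge k (m + 1) with h | h
      · rw [base k (by omega), hmval, zero_pow (by omega)]
        ring
      · have : k = m + 1 := by omega
        subst this
        have hfac : (Nat.factorial (m+1) : ℝ) ≠ 0 := Nat.cast_ne_zero.mpr (Nat.factorial_ne_zero _)
        rw [hmval, Nat.sub_self, pow_zero, mul_one, Nat.descFactorial_self, hC, ← hc,
          div_mul_cancel₀ _ hfac, sub_self]
    have hgo : g =o[nhds 0] fun t : ℝ => t ^ (m + 1) := jets hg hjets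
    have hCo : (fun t : ℝ => C * t ^ (m + 1)) =o[nhds 0] fun t : ℝ => t ^ (m + 1) := by
      have := ho.sub hgo
      refine this.congr_left fun t => by rw [hgdef]; ring
    have hC0 : C = 0 := by
      by_contra hne
      rw [Asymptotics.isLittleO_iff] at hCo
      have h2 := hCo (c := |C| / 2) (by positivity)
      rcases Metric.eventually_nhds_iff.mp h2 with ⟨δ, hδ, hb⟩
      have h3 := hb (y := δ / 2) (by rw [Real.dist_eq]; rw [abs_of_pos (by linarith)]; linarith)
      have hpos : (0:ℝ) < |(δ/2) ^ (m+1)| := by positivity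
      rw [Real.norm_eq_abs, Real.norm_eq_abs, abs_mul] at h3
      nlinarith [abs_pos.mpr hne, hpos]
    have hfac : (Nat.factorial (m+1) : ℝ) ≠ 0 := Nat.cast_ne_zero.mpr (Nat.factorial_ne_zero _)
    have hceq : c = C * (Nat.factorial (m+1) : ℝ) := by rw [hC]; field_simp
    rw [hceq, hC0, zero_mul]

lemma insert0_same {n : ℕ} (j : Fin (n + 1)) (z : EuclideanSpace ℝ (Fin n)) :
    insert0 j z j = 0 := by
  simp [insert0]

lemma insert0_succAbove {n : ℕ} (j : Fin (n + 1)) (z : EuclideanSpace ℝ (Fin n)) (l : Fin n) :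
    insert0 j z (j.succAbove l) = z l := by
  simp [insert0]

noncomputable def Lmap {n : ℕ} (j : Fin (n + 1)) : EuclideanSpace ℝ (Fin n) →ₗᵢ[ℝ] E (n + 1) where
  toLinearMap :=
    { toFun := insert0 j
      map_add' := by
        intro z w
        ext i
        show insert0 j (z + w) i = insert0 j z i + insert0 j w i
        refine Fin.succAboveCases j ?_ (fun l => ?_) i
        · simp [insert0_same]
        · simp only [insert0_succAbove]
          rfl
      map_smul' := by
        intro c z
        ext i
        show insert0 j (c • z) i = c * insert0 j z i
        refine Fin.succAboveCases j ?_ (fun l => ?_) i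
        · simp [insert0_same]
        · simp only [insert0_succAbove]
          rfl }
  norm_map' := by
    intro z
    rw [EuclideanSpace.norm_eq, EuclideanSpace.norm_eq]
    congr 1
    rw [Fin.sum_univ_succAbove _ j]
    simp [insert0_same, insert0_succAbove]

lemma Lmap_apply {n : ℕ} (j : Fin (n + 1)) (z : EuclideanSpace ℝ (Fin n)) :
    Lmap j z = insert0 j z := rfl

lemma insert0_P {n : ℕ} (j : Fin (n + 1)) {P : E (n + 1)} (hPj : P j = 0) :
    insert0 j (WithLp.toLp 2 fun i => P (j.succAbove i)) = P := by
  ext i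
  refine Fin.succAboveCases j ?_ (fun l => ?_) i
  · rw [insert0_same, hPj]
  · rw [insert0_succAbove]

lemma frontier_insert0 {n : ℕ} {Ω : Set (E (n + 1))} (hcl : IsClosed Ω) (j : Fin (n + 1))
    {x : EuclideanSpace ℝ (Fin n)} (hx : x ∈ frontier (sliceLower Ω j)) :
    insert0 j x ∈ frontier Ω := by
  have hScl : IsClosed (sliceLower Ω j) := by
    have : sliceLower Ω j = insert0 j ⁻¹' Ω := rfl
    rw [this]
    exact hcl.preimage (Lmap j).continuous
  constructor
  · exact subset_closure (hScl.frontier_subset hx)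
  · intro hint
    have hnb : Ω ∈ nhds (insert0 j x) := mem_interior_iff_mem_nhds.mp hint
    rcases Metric.mem_nhds_iff.mp hnb with ⟨r, hr, hball⟩
    have : x ∈ interior (sliceLower Ω j) := by
      rw [mem_interior_iff_mem_nhds]
      refine Filter.mem_of_superset (Metric.ball_mem_nhds x hr) ?_
      intro z hz
      have : dist (insert0 j z) (insert0 j x) < r := by
        rw [show insert0 j z = Lmap j z from rfl, show insert0 j x = Lmap j x from rfl,
          (Lmap j).dist_map]
        exact hz
      exact hball this
    exact hx.2 this

lemma chart_eq {d : ℕ} {Ω : Set (E d)} {P : E d} (bc : BoundaryChart (⊤:ℕ∞) Ω P)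
    {x : E d} (hx : x ∈ frontier Ω) (hd : ‖x - P‖ < bc.ε) :
    bc.Φ ((x - P) - ⟪x - P, bc.n⟫ • bc.n) = -⟪x - P, bc.n⟫ := by
  obtain ⟨V, hV, hxeq⟩ := bc.graph' x hx hd
  have hVn : ⟪V, bc.n⟫ = 0 := by
    have h1 := (Submodule.mem_orthogonal _ V).mp hV bc.n (Submodule.mem_span_singleton_self _)
    rw [real_inner_comm] at h1
    exact h1
  have hnn : ⟪bc.n, bc.n⟫ = (1:ℝ) := by
    rw [real_inner_self_eq_norm_mul_norm, bc.norm_n, mul_one]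
  have hxP : x - P = V - bc.Φ V • bc.n := by rw [hxeq]; abel
  rw [hxP]
  have h1 : ⟪V - bc.Φ V • bc.n, bc.n⟫ = -bc.Φ V := by
    rw [inner_sub_left, real_inner_smul_left, hVn, hnn]; ring
  rw [h1]
  have h2 : V - bc.Φ V • bc.n - (-bc.Φ V) • bc.n = V := by
    rw [neg_smul]; abel
  rw [h2, neg_neg]


lemma key_flag {n : ℕ} {Ω : Set (E (n+1))} (hcl : IsClosed Ω)
    (j : Fin (n+1)) {P : E (n+1)} (hPj : P j = 0)
    (pdP : PointData Ω P)
    {P' : EuclideanSpace ℝ (Fin n)} (hP' : P' = fun i => P (j.succAbove i))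
    (pdP' : PointData (sliceLower Ω j) P') (m : ℕ)
    {x' : EuclideanSpace ℝ (Fin n)} (hx' : x' ∈ flagSet pdP'.Φ pdP'.n m) :
    Lmap j x' ∈ flagSet pdP.Φ pdP.n m := by
  obtain ⟨hx'T, hx'D⟩ := hx'
  set ψ : ℝ → ℝ := fun t => pdP'.Φ (t • x') with hψdef
  have hsm : ContDiff ℝ (⊤:ℕ∞) fun t : ℝ => t • x' := contDiff_id.smul contDiff_const
  have hψs : ContDiff ℝ (⊤:ℕ∞) ψ := pdP'.smooth.comp hsm
  have hψ0 : ψ 0 = 0 := by simp [hψdef, pdP'.Φ0]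
  have hσd : HasDerivAt (fun t : ℝ => t • x') x' 0 := by
    simpa using (hasDerivAt_id (0:ℝ)).smul_const x'
  have hψd : HasDerivAt ψ 0 0 := by
    have h2 : HasFDerivAt pdP'.Φ (fderiv ℝ pdP'.Φ 0) ((fun t : ℝ => t • x') 0) := by
      simpa using ((pdP'.smooth.differentiable (by norm_num)) 0).hasFDerivAt
    have h3 := h2.comp_hasDerivAt 0 hσd
    rw [pdP'.dΦ0, ContinuousLinearMap.zero_apply] at h3
    exact h3
  have hjets : ∀ k ≤ m, iteratedDeriv k ψ 0 = 0 := by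
    intro k hk
    match k with
    | 0 => simpa [iteratedDeriv_zero] using hψ0
    | 1 => rw [iteratedDeriv_one]; exact hψd.deriv
    | (k+2) => exact hx'D (k+2) (by omega) hk
  have hψo : ψ =o[nhds 0] fun t : ℝ => t ^ m := jets_isLittleO hψs hjets
  set u : E (n+1) := Lmap j x' with hu
  set v : E (n+1) := Lmap j pdP'.n with hv
  set A : ℝ := ⟪u, pdP.n⟫ with hA
  set B : ℝ := ⟪v, pdP.n⟫ with hB
  set w : ℝ → E (n+1) := fun t => (t • u - ψ t • v) - (t * A - ψ t * B) • pdP.n with hwdef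
  have e1 : ∀ᶠ t : ℝ in nhds 0, ‖t • x'‖ < pdP'.ε := by
    have hc : Continuous fun t : ℝ => ‖t • x'‖ := (continuous_id.smul continuous_const).norm
    have h := hc.tendsto 0
    rw [show ‖(0:ℝ) • x'‖ = 0 by simp] at h
    exact h.eventually_lt_const pdP'.εpos
  have e2 : ∀ᶠ t : ℝ in nhds 0, ‖t • x' - ψ t • pdP'.n‖ < pdP.ε := by
    have hc : Continuous fun t : ℝ => ‖t • x' - ψ t • pdP'.n‖ :=
      ((continuous_id.smul continuous_const).sub (hψs.continuous.smul continuous_const)).norm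
    have h := hc.tendsto 0
    rw [show ‖(0:ℝ) • x' - ψ 0 • pdP'.n‖ = 0 by simp [hψ0]] at h
    exact h.eventually_lt_const pdP.εpos
  have hLP : Lmap j P' = P := by
    rw [show P' = WithLp.toLp 2 (fun i => P (j.succAbove i)) by rw [← hP']]
    exact insert0_P j hPj
  have hEq : ∀ᶠ t : ℝ in nhds 0, pdP.Φ (w t) = -(t * A - ψ t * B) := by
    filter_upwards [e1, e2] with t ht1 ht2
    have hγ : P' + t • x' - ψ t • pdP'.n ∈ frontier (sliceLower Ω j) :=
      pdP'.graph (t • x') (Submodule.smul_mem _ _ hx'T) ht1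
    have hcF : insert0 j (P' + t • x' - ψ t • pdP'.n) ∈ frontier Ω :=
      frontier_insert0 hcl j hγ
    have hcP : insert0 j (P' + t • x' - ψ t • pdP'.n) - P = t • u - ψ t • v := by
      rw [show insert0 j (P' + t • x' - ψ t • pdP'.n)
          = Lmap j (P' + t • x' - ψ t • pdP'.n) from rfl]
      rw [(Lmap j).map_sub, (Lmap j).map_add, (Lmap j).map_smul, (Lmap j).map_smul, hLP]
      abel
    have hnorm : ‖insert0 j (P' + t • x' - ψ t • pdP'.n) - P‖ < pdP.ε := by
      rw [hcP, show t • u - ψ t • v = Lmap j (t • x' - ψ t • pdP'.n) by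
        rw [(Lmap j).map_sub, (Lmap j).map_smul, (Lmap j).map_smul]]
      rw [(Lmap j).norm_map]
      exact ht2
    have hch := chart_eq pdP.toBoundaryChart hcF hnorm
    rw [hcP] at hch
    have hin : ⟪t • u - ψ t • v, pdP.n⟫ = t * A - ψ t * B := by
      rw [inner_sub_left, real_inner_smul_left, real_inner_smul_left, hA, hB]
    rw [hin] at hch
    exact hch
  have hwat : HasDerivAt w (((1:ℝ) • u - (0:ℝ) • v) - ((1*A - 0*B)) • pdP.n) 0 := by
    have h1 : HasDerivAt (fun t : ℝ => t • u) ((1:ℝ) • u) 0 := (hasDerivAt_id 0).smul_const u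
    have h2 : HasDerivAt (fun t : ℝ => ψ t • v) ((0:ℝ) • v) 0 := hψd.smul_const v
    have h3 : HasDerivAt (fun t : ℝ => t * A - ψ t * B) (1 * A - 0 * B) 0 :=
      ((hasDerivAt_id 0).mul_const A).sub (hψd.mul_const B)
    exact (h1.sub h2).sub (h3.smul_const pdP.n)
  have hgd : HasDerivAt (fun t => pdP.Φ (w t)) 0 0 := by
    have h2 : HasFDerivAt pdP.Φ (fderiv ℝ pdP.Φ 0) (w 0) := by
      have hw0 : w 0 = 0 := by simp [hwdef, hψ0]
      rw [hw0]
      exact ((pdP.smooth.differentiable (by norm_num)) 0).hasFDerivAt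
    have h3 := h2.comp_hasDerivAt 0 hwat
    rw [pdP.dΦ0, ContinuousLinearMap.zero_apply] at h3
    exact h3
  have hrd : HasDerivAt (fun t : ℝ => -(t * A - ψ t * B)) (-(1 * A - 0 * B)) 0 :=
    (((hasDerivAt_id 0).mul_const A).sub (hψd.mul_const B)).neg
  have hA0 : A = 0 := by
    have hde := Filter.EventuallyEq.deriv_eq hEq
    rw [hgd.deriv, hrd.deriv] at hde
    have : (0:ℝ) = -(1 * A - 0 * B) := hde
    linarith
  set Y : E (n+1) := v - B • pdP.n with hY
  have hwY : ∀ t, w t = t • u - ψ t • Y := by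
    intro t
    rw [hwdef, hY, hA0]
    simp only
    module
  obtain ⟨K, s, hs, hK⟩ :=
    ((pdP.smooth.contDiffAt (x := 0)).of_le (mod_cast le_top)).exists_lipschitzOnWith
  have t1 : Filter.Tendsto (fun t : ℝ => t • u) (nhds 0) (nhds 0) := by
    have hc : Continuous fun t : ℝ => t • u := continuous_id.smul continuous_const
    have h := hc.tendsto (0:ℝ)
    simpa using h
  have t2 : Filter.Tendsto (fun t : ℝ => t • u - ψ t • Y) (nhds 0) (nhds 0) := by
    have hc : Continuous fun t : ℝ => t • u - ψ t • Y :=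
      (continuous_id.smul continuous_const).sub (hψs.continuous.smul continuous_const)
    have h := hc.tendsto 0
    simpa [hψ0] using h
  have hdiffO : (fun t => pdP.Φ (t • u) - pdP.Φ (w t)) =O[nhds 0] ψ := by
    rw [Asymptotics.isBigO_iff]
    refine ⟨(K : ℝ) * ‖Y‖, ?_⟩
    filter_upwards [t1.eventually_mem hs, t2.eventually_mem hs] with t h3 h4
    have hd := hK.dist_le_mul _ h3 _ (by rw [← hwY] at h4; exact h4)
    rw [hwY] at hd ⊢
    rw [Real.dist_eq, dist_eq_norm] at hd
    have harg : t • u - (t • u - ψ t • Y) = ψ t • Y := by abel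
    rw [harg, norm_smul, Real.norm_eq_abs] at hd
    calc ‖pdP.Φ (t • u) - pdP.Φ (t • u - ψ t • Y)‖
        = |pdP.Φ (t • u) - pdP.Φ (t • u - ψ t • Y)| := rfl
      _ ≤ (K : ℝ) * (|ψ t| * ‖Y‖) := hd
      _ = (K : ℝ) * ‖Y‖ * ‖ψ t‖ := by rw [Real.norm_eq_abs]; ring
  have hBo : (fun t : ℝ => ψ t * B) =o[nhds 0] fun t : ℝ => t ^ m := by
    simpa [mul_comm] using hψo.const_mul_left B
  have hwo : (fun t => pdP.Φ (w t)) =o[nhds 0] fun t : ℝ => t ^ m := by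
    refine hBo.congr' ?_ Filter.EventuallyEq.rfl
    filter_upwards [hEq] with t ht
    rw [ht, hA0]; ring
  have hFo : (fun t => pdP.Φ (t • u)) =o[nhds 0] fun t : ℝ => t ^ m := by
    have h := (hdiffO.trans_isLittleO hψo).add hwo
    exact h.congr_left fun t => by ring
  have hFs : ContDiff ℝ (⊤:ℕ∞) fun t : ℝ => pdP.Φ (t • u) :=
    pdP.smooth.comp (contDiff_id.smul contDiff_const)
  have hFd := isLittleO_jets m hFs hFo
  refine ⟨?_, ?_⟩
  · rw [Submodule.mem_orthogonal_singleton_iff_inner_left]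
    rw [← hA]; exact hA0
  · intro k h2k hkm
    exact hFd k hkm


lemma card_tail (N k : ℕ) : Nat.card {l : Fin N // k ≤ (l : ℕ)} = N - k := by
  have e : {l : Fin N // k ≤ (l : ℕ)} ≃ Fin (N - k) :=
    { toFun := fun l => ⟨(l.1 : ℕ) - k, by have h1 := l.1.isLt; have h2 := l.2; omega⟩
      invFun := fun p => ⟨⟨k + p.1, by have := p.isLt; omega⟩, by simp⟩
      left_inv := fun l => by
        apply Subtype.ext; apply Fin.ext
        have := l.2
        show k + ((l.1 : ℕ) - k) = (l.1 : ℕ)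
        omega
      right_inv := fun p => by
        apply Fin.ext
        show (k + (p : ℕ)) - k = (p : ℕ)
        omega }
  rw [Nat.card_congr e, Nat.card_eq_fintype_card, Fintype.card_fin]

lemma finrank_span_image_orthonormal {d k : ℕ} {V : Fin k → E d} (hV : Orthonormal ℝ V)
    (s : Set (Fin k)) :
    Module.finrank ℝ (Submodule.span ℝ (V '' s)) = Nat.card s := by
  have hli : LinearIndependent ℝ fun x : s => V x :=
    hV.linearIndependent.comp _ Subtype.val_injective
  rw [Set.image_eq_range, finrank_span_eq_card hli, Nat.card_eq_fintype_card]


/-- Comparison of the multitypes of `∂Ω_j` and `∂Ω` at a common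
boundary point: `ã_i ≤ 𝔞_{i+1}` (here the ambient dimension is `d = n + 1 ≥ 3`). -/
theorem statement_11 {n : ℕ} (hn : 2 ≤ n)
    {Ω : Set (E (n + 1))} (hconv : Convex ℝ Ω) (hcomp : IsCompact Ω)
    (hne : (interior Ω).Nonempty)
    (hft : ∀ Q ∈ frontier Ω, Nonempty (PointData Ω Q))
    (j : Fin (n + 1)) {P : E (n + 1)} (hPmem : P ∈ frontier Ω) (hPj : P j = 0)
    (pdP : PointData Ω P)
    {P' : EuclideanSpace ℝ (Fin n)} (hP' : P' = fun i => P (j.succAbove i))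
    (hP'mem : P' ∈ frontier (sliceLower Ω j))
    (pdP' : PointData (sliceLower Ω j) P') :
    ∀ i : Fin (n - 1), pdP'.a i ≤ pdP.a ⟨(i : ℕ) + 1, by have := i.isLt; omega⟩ := by
  intro i
  by_contra hcon
  push_neg at hcon
  set m : ℕ := pdP.a ⟨(i : ℕ) + 1, by have := i.isLt; omega⟩ with hm
  have h2m : 2 ≤ m := pdP.a_two _
  have hfb : Module.finrank ℝ (Submodule.span ℝ (flagSet pdP.Φ pdP.n m))
      = Nat.card {l : Fin ((n+1)-1) | m < pdP.a l} := by
    rw [pdP.V_flag m h2m, finrank_span_image_orthonormal pdP.V_on]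
  have hfs : Module.finrank ℝ (Submodule.span ℝ (flagSet pdP'.Φ pdP'.n m))
      = Nat.card {l : Fin (n-1) | m < pdP'.a l} := by
    rw [pdP'.V_flag m h2m, finrank_span_image_orthonormal pdP'.V_on]
  have hsub : Submodule.map (Lmap j).toLinearMap
        (Submodule.span ℝ (flagSet pdP'.Φ pdP'.n m))
      ≤ Submodule.span ℝ (flagSet pdP.Φ pdP.n m) := by
    rw [← Submodule.span_image]
    apply Submodule.span_mono
    rintro y ⟨x', hx', rfl⟩
    exact key_flag hcomp.isClosed j hPj pdP hP' pdP' m hx'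
  have hrank : Module.finrank ℝ (Submodule.span ℝ (flagSet pdP'.Φ pdP'.n m))
      ≤ Module.finrank ℝ (Submodule.span ℝ (flagSet pdP.Φ pdP.n m)) := by
    calc Module.finrank ℝ (Submodule.span ℝ (flagSet pdP'.Φ pdP'.n m))
        = Module.finrank ℝ (Submodule.map (Lmap j).toLinearMap
            (Submodule.span ℝ (flagSet pdP'.Φ pdP'.n m))) :=
          LinearEquiv.finrank_eq (Submodule.equivMapOfInjective _ (Lmap j).injective _)
      _ ≤ _ := Submodule.finrank_mono hsub
  have hmap : ∀ l : {l : Fin ((n+1)-1) // m < pdP.a l}, (i : ℕ) + 2 ≤ (l.1 : ℕ) := by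
    intro l
    by_contra hlt
    push_neg at hlt
    have hle : l.1 ≤ (⟨(i : ℕ) + 1, by have := i.isLt; omega⟩ : Fin ((n+1)-1)) := by
      rw [Fin.le_def]
      show (l.1 : ℕ) ≤ (i : ℕ) + 1
      omega
    have h2 := pdP.a_mono hle
    have h3 := l.2
    omega
  have hc1 : Nat.card {l : Fin ((n+1)-1) | m < pdP.a l}
      ≤ Nat.card {l : Fin ((n+1)-1) // (i : ℕ) + 2 ≤ (l : ℕ)} :=
    Nat.card_le_card_of_injective (fun l => ⟨l.1, hmap l⟩)
      (by intro a b hab; dsimp only at hab; simp only [Subtype.mk.injEq] at hab; exact Subtype.ext hab)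
  have hmap2 : ∀ l : {l : Fin (n-1) // (i : ℕ) ≤ (l : ℕ)}, m < pdP'.a l.1 := by
    intro l
    have hle : i ≤ l.1 := by rw [Fin.le_def]; exact l.2
    have h2 := pdP'.a_mono hle
    omega
  have hc2 : Nat.card {l : Fin (n-1) // (i : ℕ) ≤ (l : ℕ)}
      ≤ Nat.card {l : Fin (n-1) | m < pdP'.a l} :=
    Nat.card_le_card_of_injective (fun l => ⟨l.1, hmap2 l⟩)
      (by intro a b hab; dsimp only at hab; simp only [Subtype.mk.injEq] at hab; exact Subtype.ext hab)
  have ht1 := card_tail ((n+1)-1) ((i : ℕ) + 2)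
  have ht2 := card_tail (n-1) (i : ℕ)
  have hi := i.isLt
  rw [ht1] at hc1
  rw [ht2] at hc2
  rw [hfb] at hrank
  rw [hfs] at hrank
  omega

end Paper
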